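/- Let D ∈ ℝ^{(n+q)×(n+p)} have full row rank and F ∈ ℝ^{(n+q)×(p+l)}. Let D⁺F = Σ_{ℓ=1}^{rank(F)} σ_ℓ u_ℓ v_ℓᵀ be the singular value decomposition with σ₁ ≥ … ≥ σ_{rank(F)} > 0 and orthonormal {u_ℓ} ⊂ ℝ^{n+p}, {v_ℓ} ⊂ ℝ^{p+l}. For an integer ρ with n + q − rank(F) + 1 ≤ ρ ≤ n + q, define K̃ = −Σ_{ℓ=1}^{n+q−ρ+1} (1/σ_ℓ) v_ℓ u_ℓᵀ. Then D + F K̃ = D · Σ_{ℓ=n+q−ρ+2}^{n+p} u_ℓ u_ℓᵀ, and rank(D + F K̃) < ρ. -/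
import Mathlib


open Matrix

/-- Moore–Penrose pseudoinverse of a full-row-rank matrix: `D⁺ = Dᵀ (D Dᵀ)⁻¹`. -/
noncomputable def pinvR {a b : ℕ} (D : Matrix (Fin a) (Fin b) ℝ) : Matrix (Fin b) (Fin a) ℝ :=
  Dᵀ * (D * Dᵀ)⁻¹

section Aux

variable {m n o : Type*} [Fintype n]

lemma aux_vecMulVec_mul_vecMulVec (a : m → ℝ) (b c : n → ℝ) (d : o → ℝ) :
    vecMulVec a b * vecMulVec c d = (b ⬝ᵥ c) • vecMulVec a d := by
  ext i j
  simp only [Matrix.mul_apply, vecMulVec_apply, Matrix.smul_apply, smul_eq_mul, dotProduct,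
    Finset.sum_mul]
  exact Finset.sum_congr rfl fun x _ => by ring

lemma aux_mul_vecMulVec (A : Matrix m n ℝ) (a : n → ℝ) (b : o → ℝ) :
    A * vecMulVec a b = vecMulVec (A.mulVec a) b := by
  ext i j
  simp only [Matrix.mul_apply, vecMulVec_apply, Matrix.mulVec, dotProduct, Finset.sum_mul]
  exact Finset.sum_congr rfl fun x _ => by ring

lemma aux_vecMulVec_mulVec (a : m → ℝ) (b c : n → ℝ) :
    (vecMulVec a b).mulVec c = (b ⬝ᵥ c) • a := by
  ext i
  simp only [Matrix.mulVec, vecMulVec_apply, dotProduct, Pi.smul_apply, smul_eq_mul,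
    Finset.sum_mul]
  exact Finset.sum_congr rfl fun x _ => by ring

lemma aux_sum_mulVec {β : Type*} (s : Finset β) (f : β → Matrix m n ℝ) (x : n → ℝ) :
    (∑ i ∈ s, f i).mulVec x = ∑ i ∈ s, (f i).mulVec x := by
  ext j
  simp only [Matrix.mulVec, dotProduct, Matrix.sum_apply, Finset.sum_mul, Finset.sum_apply]
  exact Finset.sum_comm

lemma aux_smul_mul_smul {m n o : Type*} [Fintype n] (a c : ℝ) (A : Matrix m n ℝ) (B : Matrix n o ℝ) :
    (a • A) * (c • B) = (a * c) • (A * B) := by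
  ext i j
  simp only [Matrix.mul_apply, Matrix.smul_apply, smul_eq_mul, Finset.mul_sum]
  exact Finset.sum_congr rfl fun x _ => by ring

end Aux

theorem stmt14 {n p q l : ℕ}
    (D : Matrix (Fin (n + q)) (Fin (n + p)) ℝ) (hD : D.rank = n + q)
    (F : Matrix (Fin (n + q)) (Fin (p + l)) ℝ)
    (σ : ℕ → ℝ) (u : ℕ → Fin (n + p) → ℝ) (v : ℕ → Fin (p + l) → ℝ)
    (hσpos : ∀ ℓ < F.rank, 0 < σ ℓ)
    (hσdesc : ∀ i j : ℕ, i ≤ j → j < F.rank → σ j ≤ σ i)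
    (hu : ∀ i < n + p, ∀ j < n + p, u i ⬝ᵥ u j = if i = j then (1 : ℝ) else 0)
    (hv : ∀ i < F.rank, ∀ j < F.rank, v i ⬝ᵥ v j = if i = j then (1 : ℝ) else 0)
    (hsvd : pinvR D * F = ∑ ℓ ∈ Finset.range F.rank, σ ℓ • Matrix.vecMulVec (u ℓ) (v ℓ))
    (ρ : ℕ) (hρ1 : n + q - F.rank + 1 ≤ ρ) (hρ2 : ρ ≤ n + q)
    (K : Matrix (Fin (p + l)) (Fin (n + p)) ℝ)
    (hK : K = -∑ ℓ ∈ Finset.range (n + q - ρ + 1), (σ ℓ)⁻¹ • Matrix.vecMulVec (v ℓ) (u ℓ)) :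
    D + F * K = D * ∑ ℓ ∈ Finset.Ico (n + q - ρ + 1) (n + p), Matrix.vecMulVec (u ℓ) (u ℓ) ∧
      (D + F * K).rank < ρ := by
  classical
  set r := F.rank with hr
  set k := n + q - ρ + 1 with hkdef
  -- D * Dᵀ is invertible
  have hdetu : IsUnit (D * Dᵀ) := by
    rw [← Matrix.mulVec_surjective_iff_isUnit]
    have h2 : LinearMap.range (D * Dᵀ).mulVecLin = ⊤ := by
      apply Submodule.eq_top_of_finrank_eq
      rw [Module.finrank_fintype_fun_eq_card, Fintype.card_fin]
      rw [show Module.finrank ℝ ↥(LinearMap.range (D * Dᵀ).mulVecLin) = (D * Dᵀ).rank from rfl]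
      rw [Matrix.rank_self_mul_transpose, hD]
    have h3 : Function.Surjective ((D * Dᵀ).mulVecLin) := LinearMap.range_eq_top.mp h2
    intro y
    obtain ⟨x, hx⟩ := h3 y
    exact ⟨x, by rw [← Matrix.mulVecLin_apply]; exact hx⟩
  have hdet : IsUnit (D * Dᵀ).det := (Matrix.isUnit_iff_isUnit_det _).mp hdetu
  have hDDinv : (D * Dᵀ) * (D * Dᵀ)⁻¹ = 1 := Matrix.mul_nonsing_inv _ hdet
  have hDP : D * pinvR D = 1 := by
    rw [pinvR, ← Matrix.mul_assoc]; exact hDDinv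
  have hsymm_inv : ((D * Dᵀ)⁻¹)ᵀ = (D * Dᵀ)⁻¹ := by
    rw [Matrix.transpose_nonsing_inv, Matrix.transpose_mul, Matrix.transpose_transpose]
  have hsymmPD : (pinvR D * D)ᵀ = pinvR D * D := by
    simp [pinvR, Matrix.transpose_mul, hsymm_inv, Matrix.mul_assoc]
  have hFD : F = D * (pinvR D * F) := by
    rw [← Matrix.mul_assoc, hDP, Matrix.one_mul]
  -- arithmetic facts
  have hr_le : r ≤ n + p := by
    have h1 := Matrix.rank_mul_le_right D (pinvR D * F)
    rw [← hFD] at h1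
    have h2 := Matrix.rank_le_card_height (pinvR D * F)
    rw [Fintype.card_fin] at h2
    omega
  have hk_r : k ≤ r := by omega
  have hk_np : k ≤ n + p := le_trans hk_r hr_le
  -- singular vectors
  have hGv : ∀ ℓ < r, (pinvR D * F).mulVec (v ℓ) = σ ℓ • u ℓ := by
    intro ℓ hℓ
    rw [hsvd, aux_sum_mulVec]
    rw [Finset.sum_eq_single ℓ]
    · rw [Matrix.smul_mulVec, aux_vecMulVec_mulVec, hv ℓ hℓ ℓ hℓ]
      simp
    · intro j hj hne
      rw [Matrix.smul_mulVec, aux_vecMulVec_mulVec, hv j (Finset.mem_range.mp hj) ℓ hℓ]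
      simp [hne]
    · intro habs
      exact absurd (Finset.mem_range.mpr hℓ) habs
  have hu_eq : ∀ ℓ < k, (pinvR D * D).mulVec (u ℓ) = u ℓ := by
    intro ℓ hℓ
    have hℓr := lt_of_lt_of_le hℓ hk_r
    have hσ := hσpos ℓ hℓr
    have h2 : u ℓ = (σ ℓ)⁻¹ • (pinvR D * F).mulVec (v ℓ) := by
      rw [hGv ℓ hℓr, smul_smul, inv_mul_cancel₀ hσ.ne', one_smul]
    have h3 : (pinvR D * D) * (pinvR D * F) = pinvR D * F := by
      rw [Matrix.mul_assoc, ← Matrix.mul_assoc D, hDP, Matrix.one_mul]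
    rw [h2, Matrix.mulVec_smul, Matrix.mulVec_mulVec, h3]
  -- F * K
  have hGK : (pinvR D * F) * K = -∑ j ∈ Finset.range k, vecMulVec (u j) (u j) := by
    rw [hK, Matrix.mul_neg, neg_inj, hsvd, Matrix.sum_mul]
    simp only [Matrix.mul_sum]
    rw [Finset.sum_comm]
    apply Finset.sum_congr rfl
    intro j hj
    have hjk := Finset.mem_range.mp hj
    have hjr := lt_of_lt_of_le hjk hk_r
    rw [Finset.sum_eq_single j]
    · rw [aux_smul_mul_smul, aux_vecMulVec_mul_vecMulVec, hv j hjr j hjr]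
      simp [smul_smul, mul_inv_cancel₀ (hσpos j hjr).ne']
    · intro ℓ hℓ hne
      rw [aux_smul_mul_smul, aux_vecMulVec_mul_vecMulVec,
        hv ℓ (Finset.mem_range.mp hℓ) j hjr]
      simp [hne]
    · intro habs
      exact absurd (Finset.mem_range.mpr hjr) habs
  have hFK : F * K = -(D * ∑ j ∈ Finset.range k, vecMulVec (u j) (u j)) := by
    conv_lhs => rw [hFD]
    rw [Matrix.mul_assoc, hGK, Matrix.mul_neg]
  -- completeness of u
  have hI : ∑ ℓ ∈ Finset.range (n + p), vecMulVec (u ℓ) (u ℓ) = (1 : Matrix (Fin (n+p)) (Fin (n+p)) ℝ) := by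
    let U : Matrix (Fin (n + p)) (Fin (n + p)) ℝ := Matrix.of fun i j => u i j
    have hUU : U * Uᵀ = 1 := by
      ext i j
      have := hu i i.isLt j j.isLt
      simp only [dotProduct] at this
      simp only [Matrix.mul_apply, Matrix.transpose_apply, Matrix.one_apply, U, Matrix.of_apply]
      rw [this]
      by_cases h : (i : ℕ) = (j : ℕ)
      · simp [Fin.ext_iff, h]
      · simp [Fin.ext_iff, h]
    have hUtU : Uᵀ * U = 1 := mul_eq_one_comm.mp hUU
    ext i j
    rw [Matrix.sum_apply, ← hUtU]
    simp only [Matrix.mul_apply, Matrix.transpose_apply, U, Matrix.of_apply, vecMulVec_apply]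
    exact (Fin.sum_univ_eq_sum_range (fun ℓ => u ℓ i * u ℓ j) (n + p)).symm
  -- first part
  have hM : D + F * K = D * ∑ ℓ ∈ Finset.Ico k (n + p), vecMulVec (u ℓ) (u ℓ) := by
    rw [Finset.sum_Ico_eq_sub _ hk_np, Matrix.mul_sub, hI, Matrix.mul_one, hFK]
    abel
  refine ⟨hM, ?_⟩
  -- rank bound
  set M := ∑ ℓ ∈ Finset.Ico k (n + p), vecMulVec (u ℓ) (u ℓ) with hMdef
  let Uk : Matrix (Fin k) (Fin (n + p)) ℝ := Matrix.of fun i j => u i j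
  have hUkPD : Uk * (pinvR D * D) = Uk := by
    ext i j
    conv_lhs => rw [← hsymmPD]
    have h1 := congrFun (hu_eq i (i.isLt)) j
    simp only [Matrix.mulVec, dotProduct] at h1
    simp only [Matrix.mul_apply, Matrix.transpose_apply, Uk, Matrix.of_apply]
    rw [← h1]
    exact Finset.sum_congr rfl fun x _ => mul_comm _ _
  have hUkM : Uk * M = 0 := by
    rw [hMdef, Matrix.mul_sum]
    apply Finset.sum_eq_zero
    intro ℓ hℓ
    obtain ⟨hℓ1, hℓ2⟩ := Finset.mem_Ico.mp hℓ
    rw [aux_mul_vecMulVec]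
    have h0 : Uk.mulVec (u ℓ) = 0 := by
      ext i
      have hi : (i : ℕ) < n + p := lt_of_lt_of_le i.isLt hk_np
      have := hu i hi ℓ hℓ2
      simp only [dotProduct] at this
      simp only [Matrix.mulVec, dotProduct, Uk, Matrix.of_apply, Pi.zero_apply]
      rw [this, if_neg]
      omega
    rw [h0]
    ext i j
    simp [vecMulVec_apply]
  have hUkUkT : Uk * Ukᵀ = 1 := by
    ext i j
    have hi : (i : ℕ) < n + p := lt_of_lt_of_le i.isLt hk_np
    have hj : (j : ℕ) < n + p := lt_of_lt_of_le j.isLt hk_np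
    have := hu i hi j hj
    simp only [dotProduct] at this
    simp only [Matrix.mul_apply, Matrix.transpose_apply, Uk, Matrix.of_apply, Matrix.one_apply]
    rw [this]
    by_cases h : (i : ℕ) = (j : ℕ)
    · simp [Fin.ext_iff, h]
    · simp [Fin.ext_iff, h]
  have hTC : (Uk * pinvR D) * (D * M) = 0 := by
    rw [Matrix.mul_assoc Uk (pinvR D) (D * M), ← Matrix.mul_assoc (pinvR D) D M,
      ← Matrix.mul_assoc Uk (pinvR D * D) M, hUkPD, hUkM]
  have hTrank : k ≤ (Uk * pinvR D).rank := by
    have h1 : (Uk * pinvR D) * (D * Ukᵀ) = 1 := by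
      rw [Matrix.mul_assoc Uk (pinvR D) (D * Ukᵀ), ← Matrix.mul_assoc (pinvR D) D Ukᵀ,
        ← Matrix.mul_assoc Uk (pinvR D * D) Ukᵀ, hUkPD, hUkUkT]
    calc k = (1 : Matrix (Fin k) (Fin k) ℝ).rank := by rw [Matrix.rank_one, Fintype.card_fin]
      _ = ((Uk * pinvR D) * (D * Ukᵀ)).rank := by rw [h1]
      _ ≤ (Uk * pinvR D).rank := Matrix.rank_mul_le_left _ _
  have hsum := Matrix.rank_add_rank_le_card_of_mul_eq_zero hTC
  rw [Fintype.card_fin] at hsum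
  rw [hM]
  omega
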